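/- For a wall W of sidelength k in a graph G, the family T_W of separations (A, B) of order less than ⌈k/3⌉ such that B \ A contains at least k - ⌈k/3⌉ + 1 full rows and columns of W, is a tangle of order ⌈k/3⌉: for every separation (A, B) of order less than ⌈k/3⌉ exactly one of (A, B), (B, A) belongs to T_W, and for every three separations (A1,B1),(A2,B2),(A3,B3) in T_W we have A1 ∪ A2 ∪ A3 ≠ V(G). -/

import Mathlib

/-- A separation `(A, B)` of a graph `G`: `A ∪ B = V(G)` and there is no edge between
`A \ B` and `B \ A`.  Its order is `|A ∩ B|`. -/
def IsSeparation {V : Type*} (G : SimpleGraph V) (A B : Set V) : Prop :=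
  A ∪ B = Set.univ ∧ ∀ a ∈ A \ B, ∀ b ∈ B \ A, ¬ G.Adj a b

/-- An (abstract) wall of sidelength `k` in `G`, given by its `k` rows and `k` columns:
each row and each column induces a connected subgraph (a path), the rows are pairwise
disjoint, the columns are pairwise disjoint, and every row meets every column. -/
structure IsWall {V : Type*} (G : SimpleGraph V) (k : ℕ)
    (rows cols : Fin k → Set V) : Prop where
  rows_conn : ∀ i, (G.induce (rows i)).Connected
  cols_conn : ∀ j, (G.induce (cols j)).Connected
  rows_disj : ∀ i i', i ≠ i' → Disjoint (rows i) (rows i')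
  cols_disj : ∀ j j', j ≠ j' → Disjoint (cols j) (cols j')
  row_meets_col : ∀ i j, (rows i ∩ cols j).Nonempty

/-- `Γ` contains at least `m` full rows (resp. columns) from the family `rows`. -/
def ContainsFullRows {V : Type*} {k : ℕ} (rows : Fin k → Set V) (m : ℕ)
    (Γ : Set V) : Prop :=
  m ≤ {i : Fin k | rows i ⊆ Γ}.ncard

/-- Membership in the tangle `T_W` governed by a wall `W` of sidelength `k` (given by its
rows and columns): separations `(A, B)` of order less than `⌈k/3⌉` such that `B \ A`
contains at least `k - ⌈k/3⌉ + 1` full rows and full columns of `W`.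
(Note `⌈k/3⌉ = (k + 2) / 3` in natural numbers.) -/
def InWallTangle {V : Type*} (G : SimpleGraph V) (k : ℕ)
    (rows cols : Fin k → Set V) (A B : Set V) : Prop :=
  IsSeparation G A B ∧ (A ∩ B).ncard < (k + 2) / 3 ∧
    ContainsFullRows rows (k - (k + 2) / 3 + 1) (B \ A) ∧
    ContainsFullRows cols (k - (k + 2) / 3 + 1) (B \ A)

lemma IsSeparation.symm' {V : Type*} {G : SimpleGraph V} {A B : Set V}
    (h : IsSeparation G A B) : IsSeparation G B A :=
  ⟨by rw [Set.union_comm]; exact h.1, fun a ha b hb hadj => h.2 b hb a ha hadj.symm⟩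

lemma walk_side {V : Type*} {G : SimpleGraph V} {A B : Set V}
    (hsep : IsSeparation G A B) {S : Set V} (hS : ∀ v ∈ S, v ∉ A ∩ B)
    {u w : S} (p : (G.induce S).Walk u w) (hu : (u : V) ∈ A \ B) :
    (w : V) ∈ A \ B := by
  induction p with
  | nil => exact hu
  | @cons a b c h p ih =>
    apply ih
    have hadj : G.Adj a b := h
    have hb : (b : V) ∈ A ∪ B := by rw [hsep.1]; trivial
    have hbnot : (b : V) ∉ A ∩ B := hS b b.2
    rcases hb with hb | hb
    · exact ⟨hb, fun h' => hbnot ⟨hb, h'⟩⟩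
    · exact absurd hadj (hsep.2 a hu b ⟨hb, fun h' => hbnot ⟨h', hb⟩⟩)

lemma conn_side {V : Type*} {G : SimpleGraph V} {A B : Set V}
    (hsep : IsSeparation G A B) {S : Set V} (hconn : (G.induce S).Connected)
    (hS : ∀ v ∈ S, v ∉ A ∩ B) : S ⊆ A \ B ∨ S ⊆ B \ A := by
  obtain ⟨x⟩ := hconn.nonempty
  have hx : (x : V) ∈ A ∪ B := by rw [hsep.1]; trivial
  have hxnot := hS x x.2
  rcases hx with hx | hx
  · left
    intro y hy
    obtain ⟨p⟩ := hconn.preconnected x ⟨y, hy⟩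
    exact walk_side hsep hS p ⟨hx, fun h' => hxnot ⟨hx, h'⟩⟩
  · right
    intro y hy
    obtain ⟨p⟩ := hconn.preconnected x ⟨y, hy⟩
    have : (∀ v ∈ S, v ∉ B ∩ A) := fun v hv hv' => hS v hv ⟨hv'.2, hv'.1⟩
    exact walk_side hsep.symm' this p ⟨hx, fun h' => hxnot ⟨h', hx⟩⟩

lemma bad_count {V : Type*} [Fintype V] {k : ℕ} {rows : Fin k → Set V}
    (hdisj : ∀ i i', i ≠ i' → Disjoint (rows i) (rows i')) (X : Set V) :
    {i : Fin k | (rows i ∩ X).Nonempty}.ncard ≤ X.ncard := by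
  classical
  rcases Set.eq_empty_or_nonempty {i : Fin k | (rows i ∩ X).Nonempty} with h | ⟨i₀, hi₀⟩
  · simp [h]
  · obtain ⟨v₀, hv₀⟩ := hi₀
    apply Set.ncard_le_ncard_of_injOn
      (fun i => if h : (rows i ∩ X).Nonempty then h.some else v₀)
    · intro i hi
      simp only [Set.mem_setOf_eq] at hi
      simp only [hi, dif_pos]
      exact hi.some_mem.2
    · intro i hi j hj hij
      simp only [Set.mem_setOf_eq] at hi hj
      simp only [hi, hj, dif_pos] at hij
      by_contra hne
      exact Set.disjoint_left.mp (hdisj i j hne) hi.some_mem.1 (hij ▸ hj.some_mem.1)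

lemma clean_lb {V : Type*} [Fintype V] {k : ℕ} {rows : Fin k → Set V}
    (hdisj : ∀ i i', i ≠ i' → Disjoint (rows i) (rows i')) (X : Set V) :
    k ≤ {i : Fin k | ∀ v ∈ rows i, v ∉ X}.ncard + X.ncard := by
  have h1 := bad_count hdisj X
  have h2 : {i : Fin k | ∀ v ∈ rows i, v ∉ X} = {i : Fin k | (rows i ∩ X).Nonempty}ᶜ := by
    ext i
    simp [Set.Nonempty, Set.mem_inter_iff, not_exists]
  have h3 := Set.ncard_add_ncard_compl {i : Fin k | (rows i ∩ X).Nonempty}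
  rw [Nat.card_eq_fintype_card, Fintype.card_fin] at h3
  rw [h2]
  omega

lemma orient {V : Type*} [Fintype V] {G : SimpleGraph V} {k : ℕ}
    {rows cols : Fin k → Set V} (hW : IsWall G k rows cols)
    {A B : Set V} (hsep : IsSeparation G A B) (hord : (A ∩ B).ncard < (k + 2) / 3) :
    InWallTangle G k rows cols A B ∨ InWallTangle G k rows cols B A := by
  have hk1 : 1 ≤ k := by omega
  set m := k - (k + 2) / 3 + 1 with hm
  -- clean rows / cols counts
  have hR := clean_lb hW.rows_disj (A ∩ B)
  have hC := clean_lb hW.cols_disj (A ∩ B)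
  have hmR : m ≤ {i : Fin k | ∀ v ∈ rows i, v ∉ A ∩ B}.ncard := by omega
  have hmC : m ≤ {j : Fin k | ∀ v ∈ cols j, v ∉ A ∩ B}.ncard := by omega
  have hsideR : ∀ i ∈ {i : Fin k | ∀ v ∈ rows i, v ∉ A ∩ B},
      rows i ⊆ A \ B ∨ rows i ⊆ B \ A := fun i hi =>
    conn_side hsep (hW.rows_conn i) hi
  have hsideC : ∀ j ∈ {j : Fin k | ∀ v ∈ cols j, v ∉ A ∩ B},
      cols j ⊆ A \ B ∨ cols j ⊆ B \ A := fun j hj =>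
    conn_side hsep (hW.cols_conn j) hj
  have cross : ∀ i j, rows i ⊆ A \ B → cols j ⊆ B \ A → False := by
    intro i j hr hc
    obtain ⟨v, hv1, hv2⟩ := hW.row_meets_col i j
    exact (hc hv2).2 (hr hv1).1
  have cross2 : ∀ i j, rows i ⊆ B \ A → cols j ⊆ A \ B → False := by
    intro i j hr hc
    obtain ⟨v, hv1, hv2⟩ := hW.row_meets_col i j
    exact (hr hv1).2 (hc hv2).1
  have hpos : 1 ≤ m := by omega
  by_cases hB : ∃ i, rows i ⊆ B \ A
  · -- all clean cols in B \ A, then all clean rows in B \ A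
    obtain ⟨i₀, hi₀⟩ := hB
    have hCsub : {j : Fin k | ∀ v ∈ cols j, v ∉ A ∩ B} ⊆ {j : Fin k | cols j ⊆ B \ A} := by
      intro j hj
      rcases hsideC j hj with h | h
      · exact (cross2 i₀ j hi₀ h).elim
      · exact h
    have hmC' : m ≤ {j : Fin k | cols j ⊆ B \ A}.ncard :=
      le_trans hmC (Set.ncard_le_ncard hCsub (Set.toFinite _))
    have : {j : Fin k | cols j ⊆ B \ A}.Nonempty := by
      apply Set.nonempty_of_ncard_ne_zero
      omega
    obtain ⟨j₀, hj₀⟩ := this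
    have hRsub : {i : Fin k | ∀ v ∈ rows i, v ∉ A ∩ B} ⊆ {i : Fin k | rows i ⊆ B \ A} := by
      intro i hi
      rcases hsideR i hi with h | h
      · exact (cross i j₀ h hj₀).elim
      · exact h
    have hmR' : m ≤ {i : Fin k | rows i ⊆ B \ A}.ncard :=
      le_trans hmR (Set.ncard_le_ncard hRsub (Set.toFinite _))
    exact Or.inl ⟨hsep, hord, hmR', hmC'⟩
  · push_neg at hB
    have hRsub : {i : Fin k | ∀ v ∈ rows i, v ∉ A ∩ B} ⊆ {i : Fin k | rows i ⊆ A \ B} := by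
      intro i hi
      rcases hsideR i hi with h | h
      · exact h
      · exact absurd h (hB i)
    have hmR' : m ≤ {i : Fin k | rows i ⊆ A \ B}.ncard :=
      le_trans hmR (Set.ncard_le_ncard hRsub (Set.toFinite _))
    have : {i : Fin k | rows i ⊆ A \ B}.Nonempty := by
      apply Set.nonempty_of_ncard_ne_zero
      omega
    obtain ⟨i₀, hi₀⟩ := this
    have hCsub : {j : Fin k | ∀ v ∈ cols j, v ∉ A ∩ B} ⊆ {j : Fin k | cols j ⊆ A \ B} := by
      intro j hj
      rcases hsideC j hj with h | h
      · exact h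
      · exact (cross i₀ j hi₀ h).elim
    have hmC' : m ≤ {j : Fin k | cols j ⊆ A \ B}.ncard :=
      le_trans hmC (Set.ncard_le_ncard hCsub (Set.toFinite _))
    exact Or.inr ⟨hsep.symm', by rwa [Set.inter_comm], hmR', hmC'⟩


/-- The family `T_W` of separations governed by a wall `W` of sidelength `k` is a tangle
of order `⌈k/3⌉`: every separation of order less than `⌈k/3⌉` has exactly one of its two
orientations in `T_W`, and no three small sides of members of `T_W` cover `V(G)`. -/
theorem wall_tangle_is_tangle {V : Type*} [Fintype V] (G : SimpleGraph V)
    {k : ℕ} (rows cols : Fin k → Set V) (hW : IsWall G k rows cols) :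
    (∀ A B : Set V, IsSeparation G A B → (A ∩ B).ncard < (k + 2) / 3 →
      ((InWallTangle G k rows cols A B ∨ InWallTangle G k rows cols B A) ∧
        ¬ (InWallTangle G k rows cols A B ∧ InWallTangle G k rows cols B A))) ∧
    (∀ A₁ B₁ A₂ B₂ A₃ B₃ : Set V,
      InWallTangle G k rows cols A₁ B₁ → InWallTangle G k rows cols A₂ B₂ →
      InWallTangle G k rows cols A₃ B₃ → A₁ ∪ A₂ ∪ A₃ ≠ Set.univ) := by
  constructor
  · intro A B hsep hord
    refine ⟨orient hW hsep hord, ?_⟩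
    rintro ⟨h1, h2⟩
    have hk1 : 1 ≤ k := by omega
    have hRB := h1.2.2.1
    have hRA := h2.2.2.1
    unfold ContainsFullRows at hRB hRA
    have hdisj : Disjoint {i : Fin k | rows i ⊆ B \ A} {i : Fin k | rows i ⊆ A \ B} := by
      rw [Set.disjoint_left]
      intro i hiB hiA
      obtain ⟨v, hv, _⟩ := hW.row_meets_col i ⟨0, hk1⟩
      exact (hiB hv).2 (hiA hv).1
    have hle : ({i : Fin k | rows i ⊆ B \ A} ∪ {i : Fin k | rows i ⊆ A \ B}).ncard ≤ k := by
      have := Set.ncard_le_ncard (Set.subset_univ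
        ({i : Fin k | rows i ⊆ B \ A} ∪ {i : Fin k | rows i ⊆ A \ B})) (Set.toFinite _)
      rwa [Set.ncard_univ, Nat.card_eq_fintype_card, Fintype.card_fin] at this
    rw [Set.ncard_union_eq hdisj (Set.toFinite _) (Set.toFinite _)] at hle
    omega
  · intro A₁ B₁ A₂ B₂ A₃ B₃ h1 h2 h3
    have hk1 : 1 ≤ k := by have := h1.2.1; omega
    have badle : ∀ (A B : Set V), InWallTangle G k rows cols A B →
        {i : Fin k | rows i ⊆ B \ A}ᶜ.ncard ≤ (k + 2) / 3 - 1 := by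
      intro A B h
      have hg := h.2.2.1
      unfold ContainsFullRows at hg
      have h3' := Set.ncard_add_ncard_compl {i : Fin k | rows i ⊆ B \ A}
      rw [Nat.card_eq_fintype_card, Fintype.card_fin] at h3'
      have hgk : {i : Fin k | rows i ⊆ B \ A}.ncard ≤ k := by
        have := Set.ncard_le_ncard (Set.subset_univ {i : Fin k | rows i ⊆ B \ A})
          (Set.toFinite _)
        rwa [Set.ncard_univ, Nat.card_eq_fintype_card, Fintype.card_fin] at this
      omega
    have b1 := badle A₁ B₁ h1
    have b2 := badle A₂ B₂ h2
    have b3 := badle A₃ B₃ h3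
    have hex : ∃ i : Fin k, rows i ⊆ B₁ \ A₁ ∧ rows i ⊆ B₂ \ A₂ ∧ rows i ⊆ B₃ \ A₃ := by
      by_contra hcon
      push_neg at hcon
      have hcover : (Set.univ : Set (Fin k)) ⊆
          {i : Fin k | rows i ⊆ B₁ \ A₁}ᶜ ∪ {i : Fin k | rows i ⊆ B₂ \ A₂}ᶜ ∪
          {i : Fin k | rows i ⊆ B₃ \ A₃}ᶜ := by
        intro i _
        by_cases c1 : rows i ⊆ B₁ \ A₁
        · by_cases c2 : rows i ⊆ B₂ \ A₂
          · exact Or.inr (hcon i c1 c2)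
          · exact Or.inl (Or.inr c2)
        · exact Or.inl (Or.inl c1)
      have hcard : k ≤ ({i : Fin k | rows i ⊆ B₁ \ A₁}ᶜ ∪ {i : Fin k | rows i ⊆ B₂ \ A₂}ᶜ ∪
          {i : Fin k | rows i ⊆ B₃ \ A₃}ᶜ).ncard := by
        have := Set.ncard_le_ncard hcover (Set.toFinite _)
        rwa [Set.ncard_univ, Nat.card_eq_fintype_card, Fintype.card_fin] at this
      have hub := le_trans hcard (le_trans (Set.ncard_union_le _ _)
        (add_le_add_left (Set.ncard_union_le _ _) _))
      omega
    obtain ⟨i, hi1, hi2, hi3⟩ := hex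
    obtain ⟨v, hv, _⟩ := hW.row_meets_col i ⟨0, hk1⟩
    intro heq
    have hvmem : v ∈ A₁ ∪ A₂ ∪ A₃ := heq ▸ Set.mem_univ v
    rcases hvmem with (h | h) | h
    · exact (hi1 hv).2 h
    · exact (hi2 hv).2 h
    · exact (hi3 hv).2 h
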